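/- Let p be an odd prime, n ≥ 1, l < e positive integers, m ∈ (ℤ/pⁿℤ)*, i ≥ 1, and let δ = [[1, p^l·m],[0, 1+p^i]] ∈ GL₂(ℤ/pⁿℤ). Then δ^(p^{e−l}) has the form [[1, p^e·m'],[0, (1+p^i)^{p^{e−l}}]] for some m' ∈ (ℤ/pⁿℤ)*. -/

import Mathlib

open Matrix

private lemma aux_pow {R : Type*} [CommRing R] (a b : R) (k : ℕ) :
    (!![1, a; 0, b] : Matrix (Fin 2) (Fin 2) R) ^ k =
      !![1, a * ∑ j ∈ Finset.range k, b ^ j; 0, b ^ k] := by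
  induction k with
  | zero => simp [Matrix.one_fin_two]
  | succ k ih =>
    rw [pow_succ', ih, Matrix.mul_fin_two, geom_sum_succ']
    ext i j
    fin_cases i <;> fin_cases j <;> simp <;> ring

/-- Let `p` be an odd prime, `n ≥ 1`, `1 ≤ l < e`, `m ∈ (ℤ/pⁿℤ)*`,
`i ≥ 1`, and `δ = [[1, pˡ·m],[0, 1+pⁱ]]`.  Then `δ^(p^(e-l))` has the form
`[[1, pᵉ·m'],[0, (1+pⁱ)^(p^(e-l))]]` for some unit `m'`. -/
theorem statement8 (p : ℕ) (hp : p.Prime) (hodd : Odd p) (n : ℕ) (hn : 1 ≤ n)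
    (l e i : ℕ) (hl : 1 ≤ l) (hle : l < e) (hi : 1 ≤ i)
    (m : (ZMod (p ^ n))ˣ)
    (δ : Matrix (Fin 2) (Fin 2) (ZMod (p ^ n)))
    (hδ : δ = !![1, (p : ZMod (p ^ n)) ^ l * (m : ZMod (p ^ n));
                 0, 1 + (p : ZMod (p ^ n)) ^ i]) :
    ∃ m' : (ZMod (p ^ n))ˣ,
      δ ^ (p ^ (e - l)) =
        !![1, (p : ZMod (p ^ n)) ^ e * (m' : ZMod (p ^ n));
           0, (1 + (p : ZMod (p ^ n)) ^ i) ^ (p ^ (e - l))] := by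
  have hpI : Prime (p : ℤ) := Nat.prime_iff_prime_int.mp hp
  set t := e - l with ht_def
  have ht : 1 ≤ t := by omega
  have hel : l + t = e := by omega
  set x : ℤ := 1 + (p : ℤ) ^ i with hx_def
  set S : ℤ := ∑ j ∈ Finset.range (p ^ t), x ^ j with hS_def
  have hxS : S * (p : ℤ) ^ i = x ^ (p ^ t) - 1 := by
    have h := geom_sum_mul x (p ^ t)
    rw [hx_def] at h ⊢
    simpa using h
  -- not p ∣ x
  have hpx : ¬ (p : ℤ) ∣ x := by
    intro h
    have : (p : ℤ) ∣ 1 := by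
      have : (p : ℤ) ∣ (p : ℤ) ^ i := dvd_pow_self _ (by omega)
      have := dvd_sub h this
      simpa [hx_def] using this
    exact hpI.not_unit (isUnit_of_dvd_one this)
  have hxy : (p : ℤ) ∣ x - 1 := by
    simp only [hx_def, add_sub_cancel_left]
    exact dvd_pow_self _ (by omega)
  -- LTE
  have hlte := Int.emultiplicity_pow_sub_pow hp hodd hxy hpx (p ^ t)
  have h1 : emultiplicity (p : ℤ) (x - 1) = (i : ℕ∞) := by
    have : x - 1 = (p : ℤ) ^ i := by rw [hx_def]; ring
    rw [this, emultiplicity_pow_self_of_prime hpI]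
  have h2 : emultiplicity p (p ^ t) = (t : ℕ∞) :=
    emultiplicity_pow_self_of_prime hp.prime t
  have h3 : emultiplicity (p : ℤ) (x ^ (p ^ t) - 1 ^ (p ^ t)) = ((i + t : ℕ) : ℕ∞) := by
    rw [hlte, h1, h2]; push_cast; ring
  have h4 : emultiplicity (p : ℤ) (S * (p : ℤ) ^ i) = ((i + t : ℕ) : ℕ∞) := by
    rw [hxS]; simpa using h3
  have h5 : emultiplicity (p : ℤ) S = (t : ℕ∞) := by
    rw [emultiplicity_mul hpI, emultiplicity_pow_self_of_prime hpI] at h4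
    have := h4
    -- cancel i
    rw [show ((i + t : ℕ) : ℕ∞) = (t : ℕ∞) + (i : ℕ∞) by push_cast; ring] at this
    exact WithTop.add_right_cancel (ENat.coe_ne_top i) this
  obtain ⟨hdvd, hndvd⟩ := emultiplicity_eq_coe.mp h5
  obtain ⟨u, hu⟩ := hdvd
  have hpu : ¬ (p : ℤ) ∣ u := by
    intro ⟨v, hv⟩
    exact hndvd ⟨v, by rw [hu, hv]; ring⟩
  -- u is a unit in ZMod (p^n)
  have hcop : IsCoprime ((p : ℤ) ^ n) u :=
    (IsCoprime.pow_left ((hpI.coprime_iff_not_dvd).mpr hpu))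
  obtain ⟨a, b, hab⟩ := hcop
  have hab' : (b : ZMod (p ^ n)) * (u : ZMod (p ^ n)) = 1 := by
    have := congrArg (fun z : ℤ => (z : ZMod (p ^ n))) hab
    push_cast at this
    rw [show ((p : ZMod (p ^ n)) ^ n) = 0 by
      have : ((p ^ n : ℕ) : ZMod (p ^ n)) = 0 := ZMod.natCast_self _
      push_cast at this; exact this] at this
    simpa using this
  have huu : IsUnit ((u : ℤ) : ZMod (p ^ n)) :=
    IsUnit.of_mul_eq_one _ (by rw [mul_comm]; exact hab')
  refine ⟨m * huu.unit, ?_⟩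
  rw [hδ, aux_pow]
  congr 1
  -- only the (0,1) entry differs
  have hScast : (∑ j ∈ Finset.range (p ^ t), (1 + (p : ZMod (p ^ n)) ^ i) ^ j)
      = ((S : ℤ) : ZMod (p ^ n)) := by
    rw [hS_def]
    push_cast [hx_def]
    rfl
  have hu' : ((S : ℤ) : ZMod (p ^ n)) = (p : ZMod (p ^ n)) ^ t * ((u : ℤ) : ZMod (p ^ n)) := by
    rw [hu]; push_cast; ring
  rw [hScast, hu']
  have : ((m * huu.unit : (ZMod (p ^ n))ˣ) : ZMod (p ^ n))
      = (m : ZMod (p ^ n)) * ((u : ℤ) : ZMod (p ^ n)) := by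
    simp [Units.val_mul, IsUnit.unit_spec]
  rw [this, ← hel]
  ring
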